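/- arXiv:2106.05641 — 6 statements merged into one kernel-verified Lean document; each statement's English description precedes it below -/
import Mathlib

section
/- Let Ω ⊆ ℝ^N be a nonempty open set and let E ⊆ ℝ^N be a measurable set with P^γ_{s₀}(E;Ω) < ∞ for some s₀ ∈ (0,1). Then limsup_{s→0⁺} s·P^γ_s(E;Ω) ≤ 2(γ(E)γ(Ω\E) + γ(E∩Ω)γ(Eᶜ∩Ωᶜ)). -/
open MeasureTheory Real Set Filter

noncomputable def gaussDensity (N : ℕ) (x : EuclideanSpace ℝ (Fin N)) : ℝ :=
  (2 * π) ^ (-(N : ℝ) / 2) * Real.exp (-‖x‖ ^ 2 / 2)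

noncomputable def gaussMeasure (N : ℕ) : Measure (EuclideanSpace ℝ (Fin N)) :=
  volume.withDensity fun x => ENNReal.ofReal (gaussDensity N x)

noncomputable def mehler (N : ℕ) (t : ℝ) (x y : EuclideanSpace ℝ (Fin N)) : ℝ :=
  (1 - Real.exp (-2 * t)) ^ (-(N : ℝ) / 2) *
    Real.exp (-(Real.exp (-2 * t) * ‖x‖ ^ 2 - 2 * Real.exp (-t) * (inner ℝ x y : ℝ) +
      Real.exp (-2 * t) * ‖y‖ ^ 2) / (2 * (1 - Real.exp (-2 * t))))

noncomputable def Kker (N : ℕ) (σ : ℝ) (x y : EuclideanSpace ℝ (Fin N)) : ENNReal :=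
  ∫⁻ t in Ioi (0 : ℝ), ENNReal.ofReal (mehler N t x y * t ^ (-σ / 2 - 1))

noncomputable def Lgamma (N : ℕ) (s : ℝ) (A B : Set (EuclideanSpace ℝ (Fin N))) : ENNReal :=
  ∫⁻ x in A, ∫⁻ y in B, Kker N s x y ∂(gaussMeasure N) ∂(gaussMeasure N)

noncomputable def Pgamma (N : ℕ) (s : ℝ) (E Ω : Set (EuclideanSpace ℝ (Fin N))) : ENNReal :=
  Lgamma N s (E ∩ Ω) (Eᶜ ∩ Ω) + Lgamma N s (E ∩ Ω) (Eᶜ ∩ Ωᶜ) + Lgamma N s (E ∩ Ωᶜ) (Eᶜ ∩ Ω)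

/-! ### Auxiliary definitions -/

noncomputable def gEps (T : ℝ) : ℝ := Real.exp (-T) / (1 - Real.exp (-2))

noncomputable def cT (N : ℕ) (T : ℝ) : ℝ := (1 - Real.exp (-2 * T)) ^ (-(N : ℝ) / 2)

noncomputable def Jint (N : ℕ) (ε : ℝ) (S : Set (EuclideanSpace ℝ (Fin N))) : ENNReal :=
  ∫⁻ x in S, ENNReal.ofReal (Real.exp (ε / 2 * ‖x‖ ^ 2)) ∂(gaussMeasure N)

lemma one_sub_exp_neg_two_pos : 0 < 1 - Real.exp (-2) := by
  have : Real.exp (-2 : ℝ) < 1 := Real.exp_lt_one_iff.mpr (by norm_num)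
  linarith

lemma gEps_nonneg (T : ℝ) : 0 ≤ gEps T :=
  div_nonneg (Real.exp_nonneg _) one_sub_exp_neg_two_pos.le

lemma gEps_le_half {T : ℝ} (hT : 1 ≤ T) : gEps T ≤ 1 / 2 := by
  have h1 : Real.exp (-T) ≤ Real.exp (-1) := Real.exp_le_exp.mpr (by linarith)
  have h2 : Real.exp (-1 : ℝ) < 0.37 := by
    have h3 : (2.7182818283 : ℝ) < Real.exp 1 := Real.exp_one_gt_d9
    rw [Real.exp_neg]
    rw [inv_lt_iff_one_lt_mul₀] <;> nlinarith
  have h4 : Real.exp (-2 : ℝ) = Real.exp (-1) * Real.exp (-1) := by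
    rw [← Real.exp_add]; norm_num
  have h5 : 0 < Real.exp (-1 : ℝ) := Real.exp_pos _
  rw [gEps, div_le_iff₀ one_sub_exp_neg_two_pos]
  nlinarith

lemma tendsto_gEps : Tendsto gEps atTop (nhds 0) := by
  have := tendsto_exp_neg_atTop_nhds_zero.div_const (1 - Real.exp (-2))
  simpa using (show Tendsto gEps atTop _ from this)

/-! ### Pointwise bound on the Mehler kernel for large times -/

lemma mehler_nonneg (N : ℕ) {t : ℝ} (ht : 0 < t) (x y : EuclideanSpace ℝ (Fin N)) :
    0 ≤ mehler N t x y := by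
  have h1 : 0 < 1 - Real.exp (-2 * t) := by
    have : Real.exp (-2 * t) < 1 := Real.exp_lt_one_iff.mpr (by linarith)
    linarith
  unfold mehler
  positivity

lemma mehler_le (N : ℕ) {T t : ℝ} (hT : 1 ≤ T) (ht : T ≤ t) (x y : EuclideanSpace ℝ (Fin N)) :
    mehler N t x y ≤ cT N T *
      (Real.exp (gEps T / 2 * ‖x‖ ^ 2) * Real.exp (gEps T / 2 * ‖y‖ ^ 2)) := by
  have ht1 : 1 ≤ t := hT.trans ht
  have hAt : 0 < 1 - Real.exp (-2 * t) := by
    have : Real.exp (-2 * t) < 1 := Real.exp_lt_one_iff.mpr (by linarith)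
    linarith
  have hAT : 0 < 1 - Real.exp (-2 * T) := by
    have : Real.exp (-2 * T) < 1 := Real.exp_lt_one_iff.mpr (by linarith)
    linarith
  have hbase : 1 - Real.exp (-2 * T) ≤ 1 - Real.exp (-2 * t) := by
    have : Real.exp (-2 * t) ≤ Real.exp (-2 * T) := Real.exp_le_exp.mpr (by linarith)
    linarith
  -- the rpow factor
  have hfac : (1 - Real.exp (-2 * t)) ^ (-(N : ℝ) / 2) ≤ cT N T := by
    rw [cT, show (-(N : ℝ) / 2) = -((N : ℝ) / 2) by ring,
      Real.rpow_neg hAt.le, Real.rpow_neg hAT.le]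
    exact inv_anti₀ (Real.rpow_pos_of_pos hAT _) (Real.rpow_le_rpow hAT.le hbase (by positivity))
  -- the exponential factor
  have hexp : Real.exp (-(Real.exp (-2 * t) * ‖x‖ ^ 2 - 2 * Real.exp (-t) * (inner ℝ x y : ℝ) +
      Real.exp (-2 * t) * ‖y‖ ^ 2) / (2 * (1 - Real.exp (-2 * t))))
      ≤ Real.exp (gEps T / 2 * ‖x‖ ^ 2) * Real.exp (gEps T / 2 * ‖y‖ ^ 2) := by
    rw [← Real.exp_add, Real.exp_le_exp]
    have hinner : (inner ℝ x y : ℝ) ≤ ‖x‖ * ‖y‖ := real_inner_le_norm x y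
    have hb : 0 < Real.exp (-t) := Real.exp_pos _
    have ha : 0 ≤ Real.exp (-2 * t) := Real.exp_nonneg _
    have hnum : -(Real.exp (-2 * t) * ‖x‖ ^ 2 - 2 * Real.exp (-t) * (inner ℝ x y : ℝ) +
        Real.exp (-2 * t) * ‖y‖ ^ 2) ≤ Real.exp (-t) * (‖x‖ ^ 2 + ‖y‖ ^ 2) := by
      nlinarith [sq_nonneg (‖x‖ - ‖y‖), sq_nonneg ‖x‖, sq_nonneg ‖y‖,
        mul_nonneg ha (sq_nonneg ‖x‖), mul_nonneg ha (sq_nonneg ‖y‖)]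
    have hden : 0 < 2 * (1 - Real.exp (-2 * t)) := by linarith
    calc -(Real.exp (-2 * t) * ‖x‖ ^ 2 - 2 * Real.exp (-t) * (inner ℝ x y : ℝ) +
            Real.exp (-2 * t) * ‖y‖ ^ 2) / (2 * (1 - Real.exp (-2 * t)))
        ≤ Real.exp (-t) * (‖x‖ ^ 2 + ‖y‖ ^ 2) / (2 * (1 - Real.exp (-2 * t))) := by
          gcongr
      _ ≤ Real.exp (-T) * (‖x‖ ^ 2 + ‖y‖ ^ 2) / (2 * (1 - Real.exp (-2 : ℝ))) := by
          refine div_le_div₀ (by positivity) ?_ (by have := one_sub_exp_neg_two_pos; linarith) ?_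
          · have : Real.exp (-t) ≤ Real.exp (-T) := Real.exp_le_exp.mpr (by linarith)
            nlinarith [sq_nonneg ‖x‖, sq_nonneg ‖y‖]
          · have : Real.exp (-2 * t) ≤ Real.exp (-2 : ℝ) := Real.exp_le_exp.mpr (by linarith)
            linarith
      _ = gEps T / 2 * ‖x‖ ^ 2 + gEps T / 2 * ‖y‖ ^ 2 := by
          rw [gEps]; field_simp
  calc mehler N t x y
      ≤ (1 - Real.exp (-2 * t)) ^ (-(N : ℝ) / 2) *
        (Real.exp (gEps T / 2 * ‖x‖ ^ 2) * Real.exp (gEps T / 2 * ‖y‖ ^ 2)) := by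
        exact mul_le_mul_of_nonneg_left hexp (by positivity)
    _ ≤ cT N T * (Real.exp (gEps T / 2 * ‖x‖ ^ 2) * Real.exp (gEps T / 2 * ‖y‖ ^ 2)) := by
        exact mul_le_mul_of_nonneg_right hfac (by positivity)

/-! ### Bound on the kernel `Kker` for small `s` -/

lemma Kker_le (N : ℕ) {s s₀ T : ℝ} (hs : 0 < s) (hss₀ : s ≤ s₀) (hT : 1 ≤ T)
    (x y : EuclideanSpace ℝ (Fin N)) :
    Kker N s x y ≤ ENNReal.ofReal (T ^ (s₀ / 2)) * Kker N s₀ x y +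
      ENNReal.ofReal (2 / s) * (ENNReal.ofReal (cT N T) *
        ENNReal.ofReal (Real.exp (gEps T / 2 * ‖x‖ ^ 2)) *
        ENNReal.ofReal (Real.exp (gEps T / 2 * ‖y‖ ^ 2))) := by
  have hT0 : (0 : ℝ) < T := lt_of_lt_of_le one_pos hT
  rw [Kker, ← Set.Ioc_union_Ioi_eq_Ioi hT0.le,
    lintegral_union measurableSet_Ioi (Set.Ioc_disjoint_Ioi le_rfl)]
  gcongr ?_ + ?_
  · -- small times part
    calc ∫⁻ t in Ioc 0 T, ENNReal.ofReal (mehler N t x y * t ^ (-s / 2 - 1))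
        ≤ ∫⁻ t in Ioc 0 T, ENNReal.ofReal (T ^ (s₀ / 2)) *
            ENNReal.ofReal (mehler N t x y * t ^ (-s₀ / 2 - 1)) := by
          refine lintegral_mono_ae (((ae_restrict_mem measurableSet_Ioc).mono ?_))
          intro t ht
          rw [← ENNReal.ofReal_mul (by positivity)]
          apply ENNReal.ofReal_le_ofReal
          have hm : 0 ≤ mehler N t x y := mehler_nonneg N ht.1 x y
          have hpow : t ^ (-s / 2 - 1) ≤ T ^ (s₀ / 2) * t ^ (-s₀ / 2 - 1) := by
            have h1 : t ^ (-s / 2 - 1) = t ^ ((s₀ - s) / 2) * t ^ (-s₀ / 2 - 1) := by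
              rw [← Real.rpow_add ht.1]; ring_nf
            rw [h1]
            apply mul_le_mul_of_nonneg_right _ (Real.rpow_nonneg ht.1.le _)
            calc t ^ ((s₀ - s) / 2) ≤ T ^ ((s₀ - s) / 2) :=
                  Real.rpow_le_rpow ht.1.le ht.2 (by linarith)
              _ ≤ T ^ (s₀ / 2) :=
                  Real.rpow_le_rpow_of_exponent_le hT (by linarith)
          calc mehler N t x y * t ^ (-s / 2 - 1)
              ≤ mehler N t x y * (T ^ (s₀ / 2) * t ^ (-s₀ / 2 - 1)) :=
                mul_le_mul_of_nonneg_left hpow hm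
            _ = T ^ (s₀ / 2) * (mehler N t x y * t ^ (-s₀ / 2 - 1)) := by ring
      _ = ENNReal.ofReal (T ^ (s₀ / 2)) *
            ∫⁻ t in Ioc 0 T, ENNReal.ofReal (mehler N t x y * t ^ (-s₀ / 2 - 1)) :=
          lintegral_const_mul' _ _ ENNReal.ofReal_ne_top
      _ ≤ ENNReal.ofReal (T ^ (s₀ / 2)) * Kker N s₀ x y := by
          exact mul_le_mul_right (lintegral_mono_set Set.Ioc_subset_Ioi_self) _
  · -- large times part
    set G : ENNReal := ENNReal.ofReal (cT N T) *
        ENNReal.ofReal (Real.exp (gEps T / 2 * ‖x‖ ^ 2)) *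
        ENNReal.ofReal (Real.exp (gEps T / 2 * ‖y‖ ^ 2)) with hG
    have hGt : G ≠ ⊤ := by
      rw [hG]
      exact ENNReal.mul_ne_top (ENNReal.mul_ne_top ENNReal.ofReal_ne_top
        ENNReal.ofReal_ne_top) ENNReal.ofReal_ne_top
    calc ∫⁻ t in Ioi T, ENNReal.ofReal (mehler N t x y * t ^ (-s / 2 - 1))
        ≤ ∫⁻ t in Ioi T, G * ENNReal.ofReal (t ^ (-s / 2 - 1)) := by
          refine lintegral_mono_ae (((ae_restrict_mem measurableSet_Ioi).mono ?_))
          intro t ht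
          have ht' : T ≤ t := le_of_lt ht
          have h1 := mehler_le N hT ht' x y
          have h2 : 0 ≤ t ^ (-s / 2 - 1) := Real.rpow_nonneg (hT0.trans ht).le _
          calc ENNReal.ofReal (mehler N t x y * t ^ (-s / 2 - 1))
              ≤ ENNReal.ofReal ((cT N T * (Real.exp (gEps T / 2 * ‖x‖ ^ 2) *
                  Real.exp (gEps T / 2 * ‖y‖ ^ 2))) * t ^ (-s / 2 - 1)) := by
                apply ENNReal.ofReal_le_ofReal
                exact mul_le_mul_of_nonneg_right h1 h2
            _ = G * ENNReal.ofReal (t ^ (-s / 2 - 1)) := by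
                have hAT : 0 < 1 - Real.exp (-2 * T) := by
                  have : Real.exp (-2 * T) < 1 := Real.exp_lt_one_iff.mpr (by linarith)
                  linarith
                have hcT : 0 ≤ cT N T := (Real.rpow_pos_of_pos hAT _).le
                rw [hG]
                rw [ENNReal.ofReal_mul (by positivity), ENNReal.ofReal_mul hcT,
                  ENNReal.ofReal_mul (Real.exp_nonneg _)]
                ring
      _ = G * ∫⁻ t in Ioi T, ENNReal.ofReal (t ^ (-s / 2 - 1)) :=
          lintegral_const_mul' _ _ hGt
      _ ≤ G * ENNReal.ofReal (2 / s) := by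
          apply mul_le_mul_right
          have hint : IntegrableOn (fun t : ℝ => t ^ (-s / 2 - 1)) (Ioi T) :=
            integrableOn_Ioi_rpow_of_lt (by linarith) hT0
          have hnn : 0 ≤ᶠ[ae (volume.restrict (Ioi T))] fun t : ℝ => t ^ (-s / 2 - 1) :=
            (ae_restrict_mem measurableSet_Ioi).mono fun t ht =>
              Real.rpow_nonneg (hT0.trans ht).le _
          rw [← ofReal_integral_eq_lintegral_ofReal hint hnn]
          apply ENNReal.ofReal_le_ofReal
          rw [integral_Ioi_rpow_of_lt (by linarith) hT0]
          have hTs : T ^ (-s / 2 - 1 + 1) ≤ 1 := by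
            apply Real.rpow_le_one_of_one_le_of_nonpos hT
            linarith
          have hTs0 : 0 ≤ T ^ (-s / 2 - 1 + 1) := Real.rpow_nonneg hT0.le _
          rw [show -s / 2 - 1 + 1 = -s / 2 by ring] at hTs hTs0 ⊢
          have heq : -T ^ (-s / 2) / (-s / 2) = T ^ (-s / 2) * (2 / s) := by
            field_simp
          rw [heq]
          nlinarith [div_nonneg (by norm_num : (0:ℝ) ≤ 2) hs.le]
      _ = ENNReal.ofReal (2 / s) * G := mul_comm _ _

/-! ### Bound on `Lgamma` -/

lemma measurable_expfac (N : ℕ) (c : ℝ) :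
    Measurable fun x : EuclideanSpace ℝ (Fin N) =>
      ENNReal.ofReal (Real.exp (c * ‖x‖ ^ 2)) := by
  apply ENNReal.measurable_ofReal.comp
  exact (Real.measurable_exp.comp ((measurable_norm.pow_const 2).const_mul c))

lemma Lgamma_le (N : ℕ) {s s₀ T : ℝ} (hs : 0 < s) (hss₀ : s ≤ s₀) (hT : 1 ≤ T)
    (A B : Set (EuclideanSpace ℝ (Fin N))) :
    ENNReal.ofReal s * Lgamma N s A B ≤
      ENNReal.ofReal s * (ENNReal.ofReal (T ^ (s₀ / 2)) * Lgamma N s₀ A B) +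
      2 * (ENNReal.ofReal (cT N T) * Jint N (gEps T) A * Jint N (gEps T) B) := by
  set γ := gaussMeasure N
  set c₁ : ENNReal := ENNReal.ofReal (T ^ (s₀ / 2))
  set c₂ : ENNReal := ENNReal.ofReal (2 / s)
  set cc : ENNReal := ENNReal.ofReal (cT N T)
  set u : EuclideanSpace ℝ (Fin N) → ENNReal :=
    fun x => ENNReal.ofReal (Real.exp (gEps T / 2 * ‖x‖ ^ 2)) with hu
  have humeas : Measurable u := measurable_expfac N _
  have hL : Lgamma N s A B ≤ c₁ * Lgamma N s₀ A B + c₂ * (cc * Jint N (gEps T) A * Jint N (gEps T) B) := by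
    have hinner : ∀ x, (∫⁻ y in B, Kker N s x y ∂γ) ≤
        c₁ * (∫⁻ y in B, Kker N s₀ x y ∂γ) + (c₂ * (cc * u x)) * Jint N (gEps T) B := by
      intro x
      calc (∫⁻ y in B, Kker N s x y ∂γ)
          ≤ ∫⁻ y in B, (c₁ * Kker N s₀ x y + (c₂ * (cc * u x)) * u y) ∂γ := by
            apply lintegral_mono
            intro y
            have := Kker_le N hs hss₀ hT x y
            calc Kker N s x y ≤ c₁ * Kker N s₀ x y + c₂ * (cc * u x * u y) := this
              _ = c₁ * Kker N s₀ x y + (c₂ * (cc * u x)) * u y := by ring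
        _ = (∫⁻ y in B, c₁ * Kker N s₀ x y ∂γ) + ∫⁻ y in B, (c₂ * (cc * u x)) * u y ∂γ :=
            lintegral_add_right _ (humeas.const_mul _)
        _ = c₁ * (∫⁻ y in B, Kker N s₀ x y ∂γ) + (c₂ * (cc * u x)) * Jint N (gEps T) B := by
            rw [lintegral_const_mul' _ _ ENNReal.ofReal_ne_top,
              lintegral_const_mul' _ _ (by
                exact ENNReal.mul_ne_top ENNReal.ofReal_ne_top
                  (ENNReal.mul_ne_top ENNReal.ofReal_ne_top ENNReal.ofReal_ne_top))]
            rfl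
    calc Lgamma N s A B
        ≤ ∫⁻ x in A, (c₁ * (∫⁻ y in B, Kker N s₀ x y ∂γ) +
            (c₂ * (cc * Jint N (gEps T) B)) * u x) ∂γ := by
          apply lintegral_mono
          intro x
          calc (∫⁻ y in B, Kker N s x y ∂γ)
              ≤ c₁ * (∫⁻ y in B, Kker N s₀ x y ∂γ) + (c₂ * (cc * u x)) * Jint N (gEps T) B :=
                hinner x
            _ = c₁ * (∫⁻ y in B, Kker N s₀ x y ∂γ) +
                (c₂ * (cc * Jint N (gEps T) B)) * u x := by ring
      _ = (∫⁻ x in A, c₁ * (∫⁻ y in B, Kker N s₀ x y ∂γ) ∂γ) +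
            ∫⁻ x in A, (c₂ * (cc * Jint N (gEps T) B)) * u x ∂γ :=
          lintegral_add_right _ (humeas.const_mul _)
      _ = c₁ * Lgamma N s₀ A B + (c₂ * (cc * Jint N (gEps T) B)) * Jint N (gEps T) A := by
          rw [lintegral_const_mul' _ _ ENNReal.ofReal_ne_top,
            lintegral_const_mul'' _ humeas.aemeasurable]
          rfl
      _ = c₁ * Lgamma N s₀ A B + c₂ * (cc * Jint N (gEps T) A * Jint N (gEps T) B) := by ring
  calc ENNReal.ofReal s * Lgamma N s A B
      ≤ ENNReal.ofReal s * (c₁ * Lgamma N s₀ A B +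
          c₂ * (cc * Jint N (gEps T) A * Jint N (gEps T) B)) := mul_le_mul_right hL _
    _ = ENNReal.ofReal s * (c₁ * Lgamma N s₀ A B) +
        (ENNReal.ofReal s * c₂) * (cc * Jint N (gEps T) A * Jint N (gEps T) B) := by ring
    _ = ENNReal.ofReal s * (c₁ * Lgamma N s₀ A B) +
        2 * (cc * Jint N (gEps T) A * Jint N (gEps T) B) := by
      congr 1
      congr 1
      rw [← ENNReal.ofReal_mul hs.le, show s * (2 / s) = 2 by field_simp]
      simp

/-! ### Finiteness and convergence of the Gaussian integrals `Jint` -/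

lemma integrable_exp_neg_mul_sq_norm (N : ℕ) {b : ℝ} (hb : 0 < b) :
    Integrable (fun x : EuclideanSpace ℝ (Fin N) => Real.exp (-b * ‖x‖ ^ 2)) := by
  have h := (GaussianFourier.integrable_cexp_neg_mul_sq_norm_add
    (b := (b : ℂ)) (by simpa using hb) 0 (0 : EuclideanSpace ℝ (Fin N))).norm
  refine h.congr (Eventually.of_forall fun v => ?_)
  have hz : ((-b : ℂ) * (‖v‖ : ℂ) ^ 2 + 0 * ((inner ℝ (0 : EuclideanSpace ℝ (Fin N)) v : ℝ) : ℂ))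
      = ((-b * ‖v‖ ^ 2 : ℝ) : ℂ) := by push_cast; ring
  simp only [hz, Complex.norm_exp, Complex.ofReal_re]

lemma measurable_gaussDensity (N : ℕ) : Measurable (gaussDensity N) := by
  apply Measurable.const_mul
  exact Real.measurable_exp.comp ((measurable_norm.pow_const 2).neg.div_const 2)

lemma Jint_univ_ne_top (N : ℕ) {ε : ℝ} (hε : ε ≤ 1 / 2) :
    Jint N ε univ ≠ ⊤ := by
  have hb : 0 < (1 - ε) / 2 := by linarith
  have hmf : Measurable fun x : EuclideanSpace ℝ (Fin N) =>
      ENNReal.ofReal (gaussDensity N x) :=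
    ENNReal.measurable_ofReal.comp (measurable_gaussDensity N)
  rw [Jint, Measure.restrict_univ, gaussMeasure,
    lintegral_withDensity_eq_lintegral_mul _ hmf (measurable_expfac N _)]
  have heq : ∀ x : EuclideanSpace ℝ (Fin N),
      (ENNReal.ofReal (gaussDensity N x) * ENNReal.ofReal (Real.exp (ε / 2 * ‖x‖ ^ 2)))
        = ENNReal.ofReal ((2 * π) ^ (-(N : ℝ) / 2) * Real.exp (-((1 - ε) / 2) * ‖x‖ ^ 2)) := by
    intro x
    rw [← ENNReal.ofReal_mul (by unfold gaussDensity; positivity)]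
    congr 1
    unfold gaussDensity
    rw [mul_assoc, ← Real.exp_add]
    congr 2
    ring
  calc ∫⁻ x, (fun a => ENNReal.ofReal (gaussDensity N a)) x *
          (fun a => ENNReal.ofReal (Real.exp (ε / 2 * ‖a‖ ^ 2))) x
      = ∫⁻ x : EuclideanSpace ℝ (Fin N),
          ENNReal.ofReal ((2 * π) ^ (-(N : ℝ) / 2) * Real.exp (-((1 - ε) / 2) * ‖x‖ ^ 2)) :=
        lintegral_congr fun x => heq x
    _ = ENNReal.ofReal (∫ x : EuclideanSpace ℝ (Fin N),
          (2 * π) ^ (-(N : ℝ) / 2) * Real.exp (-((1 - ε) / 2) * ‖x‖ ^ 2)) := by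
        rw [← ofReal_integral_eq_lintegral_ofReal
          (((integrable_exp_neg_mul_sq_norm N hb).const_mul _))
          (Eventually.of_forall fun x => by positivity)]
    _ ≠ ⊤ := ENNReal.ofReal_ne_top

lemma Jint_ne_top (N : ℕ) {ε : ℝ} (hε : ε ≤ 1 / 2) (S : Set (EuclideanSpace ℝ (Fin N))) :
    Jint N ε S ≠ ⊤ :=
  ne_top_of_le_ne_top (Jint_univ_ne_top N hε) (lintegral_mono_set (subset_univ S))

lemma gauss_eq_Jint_zero (N : ℕ) (S : Set (EuclideanSpace ℝ (Fin N))) :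
    gaussMeasure N S = Jint N 0 S := by
  rw [Jint]
  rw [show (fun x : EuclideanSpace ℝ (Fin N) =>
    ENNReal.ofReal (Real.exp ((0 : ℝ) / 2 * ‖x‖ ^ 2))) = fun _ => 1 by
      funext x; norm_num]
  rw [setLIntegral_one]

lemma gauss_ne_top (N : ℕ) (S : Set (EuclideanSpace ℝ (Fin N))) :
    gaussMeasure N S ≠ ⊤ := by
  rw [gauss_eq_Jint_zero]
  exact Jint_ne_top N (by norm_num) S

lemma tendsto_Jint (N : ℕ) (S : Set (EuclideanSpace ℝ (Fin N))) :
    Tendsto (fun T => Jint N (gEps T) S) atTop (nhds (gaussMeasure N S)) := by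
  have h := tendsto_lintegral_filter_of_dominated_convergence
    (μ := (gaussMeasure N).restrict S)
    (F := fun T (x : EuclideanSpace ℝ (Fin N)) =>
      ENNReal.ofReal (Real.exp (gEps T / 2 * ‖x‖ ^ 2)))
    (f := fun _ => 1)
    (l := atTop)
    (fun x => ENNReal.ofReal (Real.exp (1 / 2 / 2 * ‖x‖ ^ 2)))
    (Eventually.of_forall fun T => measurable_expfac N _)
    ?_ ?_ ?_
  · simpa [setLIntegral_one, Jint] using h
  · filter_upwards [eventually_ge_atTop (1 : ℝ)] with T hT
    refine Eventually.of_forall fun x => ENNReal.ofReal_le_ofReal (Real.exp_le_exp.mpr ?_)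
    have := gEps_le_half hT
    nlinarith [sq_nonneg ‖x‖]
  · exact Jint_ne_top N le_rfl S
  · refine Eventually.of_forall fun x => ?_
    have h1 : Tendsto (fun T => gEps T / 2 * ‖x‖ ^ 2) atTop (nhds 0) := by
      have := (tendsto_gEps.div_const 2).mul_const (‖x‖ ^ 2)
      simpa using this
    have h2 := (Real.continuous_exp.tendsto 0).comp h1
    have h3 := (ENNReal.continuous_ofReal.tendsto _).comp h2
    simpa [Function.comp_def] using h3

lemma tendsto_cT (N : ℕ) :
    Tendsto (fun T => ENNReal.ofReal (cT N T)) atTop (nhds 1) := by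
  have h0 : Tendsto (fun T : ℝ => Real.exp (-2 * T)) atTop (nhds 0) := by
    have h2T : Tendsto (fun T : ℝ => 2 * T) atTop atTop :=
      Tendsto.const_mul_atTop zero_lt_two tendsto_id
    have h1 : Tendsto (fun T : ℝ => -(2 * T)) atTop atBot :=
      tendsto_neg_atTop_atBot.comp h2T
    have := Real.tendsto_exp_atBot.comp h1
    simpa [Function.comp_def, neg_mul] using this
  have h2 : Tendsto (fun T : ℝ => 1 - Real.exp (-2 * T)) atTop (nhds 1) := by
    have := tendsto_const_nhds (x := (1 : ℝ)) (f := atTop (α := ℝ)) |>.sub h0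
    simpa using this
  have h3 : Tendsto (fun T => cT N T) atTop (nhds 1) := by
    have hc : ContinuousAt (fun z : ℝ => z ^ (-(N : ℝ) / 2)) 1 :=
      Real.continuousAt_rpow_const 1 _ (Or.inl one_ne_zero)
    have := hc.tendsto.comp h2
    simpa [cT, Real.one_rpow, Function.comp_def] using this
  have := (ENNReal.continuous_ofReal.tendsto _).comp h3
  simpa [Function.comp_def] using this

/-- $\limsup_{s→0^+} s P^γ_s(E;Ω) ≤ 2(γ(E)γ(Ω\setminus E)+γ(E∩Ω)γ(E^c∩Ω^c))$. -/
theorem stmt_2 (N : ℕ) (Ω E : Set (EuclideanSpace ℝ (Fin N)))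
    (hΩopen : IsOpen Ω) (hΩne : Ω.Nonempty) (hE : MeasurableSet E)
    (s₀ : ℝ) (hs₀ : s₀ ∈ Set.Ioo (0 : ℝ) 1) (hfin : Pgamma N s₀ E Ω < ⊤) :
    Filter.limsup (fun s : ℝ => ENNReal.ofReal s * Pgamma N s E Ω)
      (nhdsWithin 0 (Set.Ioi 0))
      ≤ 2 * (gaussMeasure N E * gaussMeasure N (Ω \ E) +
        gaussMeasure N (E ∩ Ω) * gaussMeasure N (Eᶜ ∩ Ωᶜ)) := by
  obtain ⟨hs₀0, hs₀1⟩ := hs₀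
  set γ := gaussMeasure N with hγ
  have key : ∀ T : ℝ, 1 ≤ T →
      Filter.limsup (fun s : ℝ => ENNReal.ofReal s * Pgamma N s E Ω)
        (nhdsWithin 0 (Set.Ioi 0)) ≤
      2 * (ENNReal.ofReal (cT N T) * Jint N (gEps T) (E ∩ Ω) * Jint N (gEps T) (Eᶜ ∩ Ω)) +
      2 * (ENNReal.ofReal (cT N T) * Jint N (gEps T) (E ∩ Ω) * Jint N (gEps T) (Eᶜ ∩ Ωᶜ)) +
      2 * (ENNReal.ofReal (cT N T) * Jint N (gEps T) (E ∩ Ωᶜ) * Jint N (gEps T) (Eᶜ ∩ Ω)) := by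
    intro T hT
    have hCne : ENNReal.ofReal (T ^ (s₀ / 2)) * Pgamma N s₀ E Ω ≠ ⊤ :=
      ENNReal.mul_ne_top ENNReal.ofReal_ne_top hfin.ne
    have hbb : ∀ᶠ s in nhdsWithin (0 : ℝ) (Set.Ioi 0),
        ENNReal.ofReal s * Pgamma N s E Ω ≤
          ENNReal.ofReal s * (ENNReal.ofReal (T ^ (s₀ / 2)) * Pgamma N s₀ E Ω) +
          (2 * (ENNReal.ofReal (cT N T) * Jint N (gEps T) (E ∩ Ω) * Jint N (gEps T) (Eᶜ ∩ Ω)) +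
           2 * (ENNReal.ofReal (cT N T) * Jint N (gEps T) (E ∩ Ω) * Jint N (gEps T) (Eᶜ ∩ Ωᶜ)) +
           2 * (ENNReal.ofReal (cT N T) * Jint N (gEps T) (E ∩ Ωᶜ) * Jint N (gEps T) (Eᶜ ∩ Ω))) := by
      filter_upwards [Ioc_mem_nhdsGT_of_mem (Set.mem_Ico.mpr ⟨le_refl (0 : ℝ), hs₀0⟩)] with s hs
      have h1 := Lgamma_le N hs.1 hs.2 hT (E ∩ Ω) (Eᶜ ∩ Ω)
      have h2 := Lgamma_le N hs.1 hs.2 hT (E ∩ Ω) (Eᶜ ∩ Ωᶜ)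
      have h3 := Lgamma_le N hs.1 hs.2 hT (E ∩ Ωᶜ) (Eᶜ ∩ Ω)
      calc ENNReal.ofReal s * Pgamma N s E Ω
          = ENNReal.ofReal s * Lgamma N s (E ∩ Ω) (Eᶜ ∩ Ω) +
            ENNReal.ofReal s * Lgamma N s (E ∩ Ω) (Eᶜ ∩ Ωᶜ) +
            ENNReal.ofReal s * Lgamma N s (E ∩ Ωᶜ) (Eᶜ ∩ Ω) := by
            rw [Pgamma]; ring
        _ ≤ _ := add_le_add (add_le_add h1 h2) h3
        _ = ENNReal.ofReal s * (ENNReal.ofReal (T ^ (s₀ / 2)) * Pgamma N s₀ E Ω) +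
          (2 * (ENNReal.ofReal (cT N T) * Jint N (gEps T) (E ∩ Ω) * Jint N (gEps T) (Eᶜ ∩ Ω)) +
           2 * (ENNReal.ofReal (cT N T) * Jint N (gEps T) (E ∩ Ω) * Jint N (gEps T) (Eᶜ ∩ Ωᶜ)) +
           2 * (ENNReal.ofReal (cT N T) * Jint N (gEps T) (E ∩ Ωᶜ) * Jint N (gEps T) (Eᶜ ∩ Ω))) := by
            rw [Pgamma]; ring
    have htend : Tendsto (fun s : ℝ =>
        ENNReal.ofReal s * (ENNReal.ofReal (T ^ (s₀ / 2)) * Pgamma N s₀ E Ω) +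
          (2 * (ENNReal.ofReal (cT N T) * Jint N (gEps T) (E ∩ Ω) * Jint N (gEps T) (Eᶜ ∩ Ω)) +
           2 * (ENNReal.ofReal (cT N T) * Jint N (gEps T) (E ∩ Ω) * Jint N (gEps T) (Eᶜ ∩ Ωᶜ)) +
           2 * (ENNReal.ofReal (cT N T) * Jint N (gEps T) (E ∩ Ωᶜ) * Jint N (gEps T) (Eᶜ ∩ Ω))))
        (nhdsWithin 0 (Set.Ioi 0))
        (nhds (2 * (ENNReal.ofReal (cT N T) * Jint N (gEps T) (E ∩ Ω) * Jint N (gEps T) (Eᶜ ∩ Ω)) +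
           2 * (ENNReal.ofReal (cT N T) * Jint N (gEps T) (E ∩ Ω) * Jint N (gEps T) (Eᶜ ∩ Ωᶜ)) +
           2 * (ENNReal.ofReal (cT N T) * Jint N (gEps T) (E ∩ Ωᶜ) * Jint N (gEps T) (Eᶜ ∩ Ω)))) := by
      have h0 : Tendsto (fun s : ℝ => ENNReal.ofReal s) (nhdsWithin 0 (Set.Ioi 0)) (nhds 0) := by
        have := (ENNReal.continuous_ofReal.tendsto 0).mono_left
          (nhdsWithin_le_nhds (s := Set.Ioi (0 : ℝ)))
        simpa using this
      have h1 := ENNReal.Tendsto.mul_const h0 (Or.inr hCne)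
      have h2 := h1.add (tendsto_const_nhds
        (x := 2 * (ENNReal.ofReal (cT N T) * Jint N (gEps T) (E ∩ Ω) * Jint N (gEps T) (Eᶜ ∩ Ω)) +
           2 * (ENNReal.ofReal (cT N T) * Jint N (gEps T) (E ∩ Ω) * Jint N (gEps T) (Eᶜ ∩ Ωᶜ)) +
           2 * (ENNReal.ofReal (cT N T) * Jint N (gEps T) (E ∩ Ωᶜ) * Jint N (gEps T) (Eᶜ ∩ Ω))))
      simpa using h2
    exact (limsup_le_limsup hbb).trans_eq htend.limsup_eq
  -- convergence as T → ∞
  have hterm : ∀ Aa Bb : Set (EuclideanSpace ℝ (Fin N)),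
      Tendsto (fun T => 2 * (ENNReal.ofReal (cT N T) * Jint N (gEps T) Aa * Jint N (gEps T) Bb))
        atTop (nhds (2 * (γ Aa * γ Bb))) := by
    intro Aa Bb
    have h1 : Tendsto (fun T => ENNReal.ofReal (cT N T) * Jint N (gEps T) Aa)
        atTop (nhds (1 * γ Aa)) :=
      ENNReal.Tendsto.mul (tendsto_cT N) (Or.inl one_ne_zero) (tendsto_Jint N Aa)
        (Or.inr ENNReal.one_ne_top)
    have h2 : Tendsto (fun T => ENNReal.ofReal (cT N T) * Jint N (gEps T) Aa * Jint N (gEps T) Bb)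
        atTop (nhds (1 * γ Aa * γ Bb)) :=
      ENNReal.Tendsto.mul h1 (Or.inr (gauss_ne_top N Bb)) (tendsto_Jint N Bb)
        (Or.inr (by simpa using gauss_ne_top N Aa))
    have h3 := ENNReal.Tendsto.const_mul h2 (Or.inr (by norm_num : (2 : ENNReal) ≠ ⊤))
    simpa using h3
  have hDt := ((hterm (E ∩ Ω) (Eᶜ ∩ Ω)).add (hterm (E ∩ Ω) (Eᶜ ∩ Ωᶜ))).add
    (hterm (E ∩ Ωᶜ) (Eᶜ ∩ Ω))
  have final := ge_of_tendsto hDt (eventually_atTop.mpr ⟨1, key⟩)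
  refine final.trans_eq ?_
  -- final algebra
  have hsplit : γ (E ∩ Ω) + γ (E ∩ Ωᶜ) = γ E := by
    have := measure_inter_add_diff (μ := γ) E hΩopen.measurableSet
    rwa [Set.diff_eq] at this
  have hdiff : Ω \ E = Eᶜ ∩ Ω := by rw [Set.diff_eq, Set.inter_comm]
  rw [hdiff, ← hsplit]
  ring
end

section
/- Let Ω ⊆ ℝ^N be a nonempty open set. Then for every measurable set E ⊆ ℝ^N, liminf_{s→0⁺} s·P^γ_s(E;Ω) ≥ 2(γ(E)γ(Ω\E) + γ(E∩Ω)γ(Eᶜ∩Ωᶜ)). -/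
open MeasureTheory Real Set Filter

/-! ### Auxiliary lemmas -/

noncomputable def gee (N : ℕ) (T : ℝ) (x : EuclideanSpace ℝ (Fin N)) : ENNReal :=
  ENNReal.ofReal (Real.exp (-(2 * Real.exp (-T)) * ‖x‖ ^ 2))

lemma gee_measurable (N : ℕ) (T : ℝ) : Measurable (gee N T) := by
  apply ENNReal.measurable_ofReal.comp
  exact (Real.continuous_exp.comp (by continuity)).measurable

lemma gaussDensity_nonneg (N : ℕ) (x : EuclideanSpace ℝ (Fin N)) : 0 ≤ gaussDensity N x := by
  unfold gaussDensity; positivity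

lemma integrable_exp_neg_sq (N : ℕ) {b : ℝ} (hb : 0 < b) :
    Integrable (fun v : EuclideanSpace ℝ (Fin N) => Real.exp (-b * ‖v‖ ^ 2)) := by
  have h0 := GaussianFourier.integrable_cexp_neg_mul_sq_norm_add
    (V := EuclideanSpace ℝ (Fin N)) (b := (b : ℂ)) (by simpa using hb) 0 0
  have h1 := h0.norm
  simp only [Complex.norm_exp] at h1
  convert h1 using 2 with v
  norm_num [← Complex.ofReal_pow, ← Complex.ofReal_mul, ← Complex.ofReal_neg]

lemma integrable_gaussDensity (N : ℕ) : Integrable (gaussDensity N) := by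
  have h := (integrable_exp_neg_sq N (b := (1/2 : ℝ)) (by norm_num)).const_mul
    ((2 * π) ^ (-(N : ℝ) / 2))
  unfold gaussDensity
  convert h using 2 with x
  ring_nf

instance gaussMeasure_finite (N : ℕ) : IsFiniteMeasure (gaussMeasure N) := by
  constructor
  rw [gaussMeasure, withDensity_apply _ MeasurableSet.univ, Measure.restrict_univ]
  exact (integrable_gaussDensity N).lintegral_lt_top

/-- Purely real inequality behind the Mehler kernel lower bound. -/
lemma real_aux (N : ℕ) {T t a b w : ℝ} (hT : 1 ≤ T) (ht : T < t)
    (hw : |w| ≤ a * b) :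
    Real.exp (-(2 * Real.exp (-T)) * a ^ 2) * Real.exp (-(2 * Real.exp (-T)) * b ^ 2)
      ≤ (1 - Real.exp (-2 * t)) ^ (-(N : ℝ) / 2) *
        Real.exp (-(Real.exp (-2 * t) * a ^ 2 - 2 * Real.exp (-t) * w +
          Real.exp (-2 * t) * b ^ 2) / (2 * (1 - Real.exp (-2 * t)))) := by
  have ht1 : (1 : ℝ) ≤ t := le_trans hT ht.le
  have hu0 : 0 < Real.exp (-t) := Real.exp_pos _
  have hue : Real.exp (-1 : ℝ) < 1 := Real.exp_lt_one_iff.2 (by norm_num)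
  have hult : Real.exp (-t) < 1 :=
    lt_of_le_of_lt (Real.exp_le_exp.2 (by linarith)) hue
  have h2t : Real.exp (-2 * t) = Real.exp (-t) ^ 2 := by
    rw [show (-2:ℝ) * t = -t + -t by ring, Real.exp_add, sq]
  have hD : (1 : ℝ) ≤ 2 * (1 - Real.exp (-2 * t)) := by
    have h1 : Real.exp (-2 * t) ≤ Real.exp (-2 : ℝ) := Real.exp_le_exp.2 (by linarith)
    have h2 : Real.exp (-2 : ℝ) ≤ 1/2 := by
      have hp : (0:ℝ) < Real.exp 2 := Real.exp_pos 2
      have h3 : (2:ℝ) ≤ Real.exp 2 := by nlinarith [Real.add_one_le_exp (2 : ℝ)]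
      rw [Real.exp_neg, inv_eq_one_div, div_le_div_iff₀ hp (by norm_num)]
      linarith
    linarith
  have hD0 : 0 < 2 * (1 - Real.exp (-2 * t)) := by linarith
  have hbase : 0 < 1 - Real.exp (-2 * t) := by linarith
  have hbase1 : 1 - Real.exp (-2 * t) ≤ 1 := by
    have := Real.exp_pos (-2 * t); linarith
  have hf1 : (1 : ℝ) ≤ (1 - Real.exp (-2 * t)) ^ (-(N : ℝ) / 2) :=
    Real.one_le_rpow_of_pos_of_le_one_of_nonpos hbase hbase1
      (by have := Nat.cast_nonneg (α := ℝ) N; linarith)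
  set A : ℝ := Real.exp (-2 * t) * a ^ 2 - 2 * Real.exp (-t) * w +
      Real.exp (-2 * t) * b ^ 2 with hA
  have hab : 0 ≤ a * b := le_trans (abs_nonneg w) hw
  have hAle : A ≤ 2 * Real.exp (-T) * (a ^ 2 + b ^ 2) := by
    have huT : Real.exp (-t) ≤ Real.exp (-T) := Real.exp_le_exp.2 (by linarith)
    have hw2 : -w ≤ a * b := by
      have := neg_abs_le w; linarith [le_abs_self w]
    have h1 : A ≤ Real.exp (-t) * (a + b) ^ 2 := by
      rw [hA, h2t]
      have hu2 : Real.exp (-t) ^ 2 ≤ Real.exp (-t) := by nlinarith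
      have hx2 := mul_le_mul_of_nonneg_right hu2 (sq_nonneg a)
      have hy2 := mul_le_mul_of_nonneg_right hu2 (sq_nonneg b)
      have hxy := mul_le_mul_of_nonneg_left hw2 (by positivity : (0:ℝ) ≤ 2 * Real.exp (-t))
      nlinarith [hx2, hy2, hxy]
    have h2 : Real.exp (-t) * (a + b) ^ 2 ≤ Real.exp (-t) * (2 * (a ^ 2 + b ^ 2)) := by
      nlinarith [sq_nonneg (a - b), hu0]
    have h3 : Real.exp (-t) * (2 * (a ^ 2 + b ^ 2)) ≤ Real.exp (-T) * (2 * (a ^ 2 + b ^ 2)) := by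
      nlinarith [sq_nonneg a, sq_nonneg b]
    linarith
  have hexp : -(2 * Real.exp (-T) * (a ^ 2 + b ^ 2)) ≤ -A / (2 * (1 - Real.exp (-2 * t))) := by
    have hdiv : A / (2 * (1 - Real.exp (-2 * t))) ≤ 2 * Real.exp (-T) * (a ^ 2 + b ^ 2) := by
      rcases le_or_gt A 0 with hA0 | hA0
      · have h4 : A / (2 * (1 - Real.exp (-2 * t))) ≤ 0 := div_nonpos_of_nonpos_of_nonneg hA0 hD0.le
        have hn : (0:ℝ) ≤ 2 * Real.exp (-T) * (a ^ 2 + b ^ 2) := by positivity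
        linarith
      · have h4 : A / (2 * (1 - Real.exp (-2 * t))) ≤ A := div_le_self hA0.le hD
        linarith
    rw [neg_div]
    linarith
  calc Real.exp (-(2 * Real.exp (-T)) * a ^ 2) * Real.exp (-(2 * Real.exp (-T)) * b ^ 2)
      = Real.exp (-(2 * Real.exp (-T) * (a ^ 2 + b ^ 2))) := by
        rw [← Real.exp_add]; congr 1; ring
    _ ≤ Real.exp (-A / (2 * (1 - Real.exp (-2 * t)))) := Real.exp_le_exp.2 hexp
    _ ≤ (1 - Real.exp (-2 * t)) ^ (-(N : ℝ) / 2) *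
          Real.exp (-A / (2 * (1 - Real.exp (-2 * t)))) := by
        nlinarith [Real.exp_pos (-A / (2 * (1 - Real.exp (-2 * t))))]

/-- Pointwise lower bound on the Mehler kernel for `t ≥ T ≥ 1`. -/
lemma mehler_lower (N : ℕ) {T t : ℝ} (hT : 1 ≤ T) (ht : T < t)
    (x y : EuclideanSpace ℝ (Fin N)) :
    Real.exp (-(2 * Real.exp (-T)) * ‖x‖ ^ 2) * Real.exp (-(2 * Real.exp (-T)) * ‖y‖ ^ 2)
      ≤ mehler N t x y := by
  rw [mehler]
  exact real_aux N hT ht (abs_real_inner_le_norm x y)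

/-- Kernel lower bound after multiplying by `s`. -/
lemma kernel_lower (N : ℕ) {s T : ℝ} (hs : 0 < s) (hT : 1 ≤ T)
    (x y : EuclideanSpace ℝ (Fin N)) :
    ENNReal.ofReal (2 * T ^ (-s / 2)) * (gee N T x * gee N T y)
      ≤ ENNReal.ofReal s * Kker N s x y := by
  have hT0 : (0 : ℝ) < T := lt_of_lt_of_le zero_lt_one hT
  set p : ℝ := -s / 2 - 1 with hp
  have hp1 : p < -1 := by rw [hp]; linarith
  set m : ℝ := Real.exp (-(2 * Real.exp (-T)) * ‖x‖ ^ 2) *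
      Real.exp (-(2 * Real.exp (-T)) * ‖y‖ ^ 2) with hm
  have hm0 : 0 ≤ m := by positivity
  -- step 1: restrict the integral to `Ioi T`
  have step1 : (∫⁻ t in Ioi T, ENNReal.ofReal (mehler N t x y * t ^ p)) ≤ Kker N s x y := by
    rw [Kker]
    exact lintegral_mono' (Measure.restrict_mono (Ioi_subset_Ioi hT0.le) le_rfl) le_rfl
  -- step 2: lower bound the integrand
  have step2 : (∫⁻ t in Ioi T, ENNReal.ofReal (m * t ^ p))
      ≤ ∫⁻ t in Ioi T, ENNReal.ofReal (mehler N t x y * t ^ p) := by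
    apply lintegral_mono_ae
    rw [ae_restrict_iff' measurableSet_Ioi]
    refine Filter.Eventually.of_forall fun t ht => ?_
    have ht' : T < t := ht
    have htpos : 0 < t := lt_trans hT0 ht'
    apply ENNReal.ofReal_le_ofReal
    exact mul_le_mul_of_nonneg_right (mehler_lower N hT ht' x y) (Real.rpow_nonneg htpos.le p)
  -- step 3: compute the integral
  have step3 : (∫⁻ t in Ioi T, ENNReal.ofReal (m * t ^ p))
      = ENNReal.ofReal m * ENNReal.ofReal (2 / s * T ^ (-s / 2)) := by
    have hmeas : Measurable fun t : ℝ => ENNReal.ofReal (t ^ p) := by measurability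
    calc (∫⁻ t in Ioi T, ENNReal.ofReal (m * t ^ p))
        = ∫⁻ t in Ioi T, ENNReal.ofReal m * ENNReal.ofReal (t ^ p) :=
          lintegral_congr fun t => ENNReal.ofReal_mul hm0
      _ = ENNReal.ofReal m * ∫⁻ t in Ioi T, ENNReal.ofReal (t ^ p) :=
          lintegral_const_mul _ hmeas
      _ = ENNReal.ofReal m * ENNReal.ofReal (2 / s * T ^ (-s / 2)) := by
          congr 1
          rw [← ofReal_integral_eq_lintegral_ofReal (integrableOn_Ioi_rpow_of_lt hp1 hT0)]
          · congr 1
            rw [integral_Ioi_rpow_of_lt hp1 hT0]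
            have hps : p + 1 = -s / 2 := by rw [hp]; ring
            rw [hps]
            field_simp
          · filter_upwards [ae_restrict_mem measurableSet_Ioi] with t ht
            exact Real.rpow_nonneg (le_trans hT0.le (le_of_lt ht)) p
  -- combine
  have hKlow : ENNReal.ofReal m * ENNReal.ofReal (2 / s * T ^ (-s / 2)) ≤ Kker N s x y := by
    rw [← step3]; exact le_trans step2 step1
  have hax : (0:ℝ) ≤ Real.exp (-(2 * Real.exp (-T)) * ‖x‖ ^ 2) := (Real.exp_pos _).le
  calc ENNReal.ofReal (2 * T ^ (-s / 2)) * (gee N T x * gee N T y)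
      = ENNReal.ofReal s * (ENNReal.ofReal m * ENNReal.ofReal (2 / s * T ^ (-s / 2))) := by
        rw [gee, gee, ← ENNReal.ofReal_mul hax,
          ← ENNReal.ofReal_mul (by positivity : (0:ℝ) ≤ 2 * T ^ (-s / 2)),
          ← ENNReal.ofReal_mul hm0, ← ENNReal.ofReal_mul hs.le]
        congr 1
        rw [← hm]
        field_simp
    _ ≤ ENNReal.ofReal s * Kker N s x y := mul_le_mul_right hKlow _

/-- Lower bound for `s * Lgamma`. -/
lemma L_lower (N : ℕ) {s T : ℝ} (hs : 0 < s) (hT : 1 ≤ T)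
    (A B : Set (EuclideanSpace ℝ (Fin N))) :
    ENNReal.ofReal (2 * T ^ (-s / 2)) *
        ((∫⁻ x in A, gee N T x ∂(gaussMeasure N)) * ∫⁻ y in B, gee N T y ∂(gaussMeasure N))
      ≤ ENNReal.ofReal s * Lgamma N s A B := by
  set γ := gaussMeasure N
  set C := ENNReal.ofReal (2 * T ^ (-s / 2)) with hC
  have hne : ENNReal.ofReal s ≠ ⊤ := ENNReal.ofReal_ne_top
  have e1 : ENNReal.ofReal s * Lgamma N s A B
      = ∫⁻ x in A, ∫⁻ y in B, ENNReal.ofReal s * Kker N s x y ∂γ ∂γ := by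
    rw [Lgamma, ← lintegral_const_mul' _ _ hne]
    refine lintegral_congr fun x => ?_
    rw [← lintegral_const_mul' _ _ hne]
  rw [e1]
  have e2 : ∀ x : EuclideanSpace ℝ (Fin N),
      (∫⁻ y in B, C * (gee N T x * gee N T y) ∂γ)
        = (C * gee N T x) * ∫⁻ y in B, gee N T y ∂γ := by
    intro x
    rw [← lintegral_const_mul _ (gee_measurable N T)]
    refine lintegral_congr fun y => by ring
  have e3 : (∫⁻ x in A, ∫⁻ y in B, C * (gee N T x * gee N T y) ∂γ ∂γ)
      = C * ((∫⁻ x in A, gee N T x ∂γ) * ∫⁻ y in B, gee N T y ∂γ) := by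
    calc (∫⁻ x in A, ∫⁻ y in B, C * (gee N T x * gee N T y) ∂γ ∂γ)
        = ∫⁻ x in A, (C * ∫⁻ y in B, gee N T y ∂γ) * gee N T x ∂γ := by
          refine lintegral_congr fun x => ?_
          rw [e2 x]; ring
      _ = (C * ∫⁻ y in B, gee N T y ∂γ) * ∫⁻ x in A, gee N T x ∂γ :=
          lintegral_const_mul _ (gee_measurable N T)
      _ = C * ((∫⁻ x in A, gee N T x ∂γ) * ∫⁻ y in B, gee N T y ∂γ) := by ring
  rw [← e3]
  exact lintegral_mono fun x => lintegral_mono fun y => kernel_lower N hs hT x y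

/-- Monotone convergence: the truncated masses converge to the full mass. -/
lemma tendsto_gee_lintegral (N : ℕ) (A : Set (EuclideanSpace ℝ (Fin N))) :
    Tendsto (fun n : ℕ => ∫⁻ x in A, gee N n x ∂(gaussMeasure N)) atTop
      (nhds (gaussMeasure N A)) := by
  have h := lintegral_tendsto_of_tendsto_of_monotone
    (f := fun n : ℕ => fun x => gee N n x) (F := fun _ => 1)
    (μ := (gaussMeasure N).restrict A)
    (fun n => (gee_measurable N n).aemeasurable)
    (Filter.Eventually.of_forall fun x => ?_) (Filter.Eventually.of_forall fun x => ?_)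
  · simpa using h
  · intro n k hnk
    apply ENNReal.ofReal_le_ofReal
    apply Real.exp_le_exp.2
    have : Real.exp (-(k : ℝ)) ≤ Real.exp (-(n : ℝ)) :=
      Real.exp_le_exp.2 (by exact_mod_cast neg_le_neg (Nat.cast_le.2 hnk))
    nlinarith [sq_nonneg ‖x‖]
  · have h1 : Tendsto (fun n : ℕ => -(2 * Real.exp (-(n : ℝ))) * ‖x‖ ^ 2) atTop (nhds 0) := by
      have he : Tendsto (fun n : ℕ => Real.exp (-(n : ℝ))) atTop (nhds 0) :=
        Real.tendsto_exp_atBot.comp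
          (tendsto_neg_atBot_iff.2 (tendsto_natCast_atTop_atTop (R := ℝ)))
      have := ((he.const_mul (2 : ℝ)).neg.mul_const (‖x‖ ^ 2))
      simpa using this
    have h2 : Tendsto (fun n : ℕ => Real.exp (-(2 * Real.exp (-(n : ℝ))) * ‖x‖ ^ 2)) atTop
        (nhds 1) := by
      simpa [Function.comp_def] using (Real.continuous_exp.tendsto 0).comp h1
    have h3 := (ENNReal.continuous_ofReal.tendsto 1).comp h2
    simpa [gee, Function.comp_def] using h3

/-- $\liminf_{s→0^+} s P^γ_s(E;Ω) ≥ 2(γ(E)γ(Ω\setminus E)+γ(E∩Ω)γ(E^c∩Ω^c))$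
for every measurable set $E$. -/
theorem stmt_3 (N : ℕ) (Ω : Set (EuclideanSpace ℝ (Fin N)))
    (hΩopen : IsOpen Ω) (hΩne : Ω.Nonempty) :
    ∀ E : Set (EuclideanSpace ℝ (Fin N)), MeasurableSet E →
    2 * (gaussMeasure N E * gaussMeasure N (Ω \ E) +
        gaussMeasure N (E ∩ Ω) * gaussMeasure N (Eᶜ ∩ Ωᶜ))
      ≤ Filter.liminf (fun s : ℝ => ENNReal.ofReal s * Pgamma N s E Ω)
          (nhdsWithin 0 (Set.Ioi 0)) := by
  intro E hE
  set γ := gaussMeasure N with hγ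
  have hΩm : MeasurableSet Ω := hΩopen.measurableSet
  -- rewrite the constant
  have hdiff : Ω \ E = Eᶜ ∩ Ω := by ext z; simp [and_comm]
  have hsplit : γ E = γ (E ∩ Ω) + γ (E ∩ Ωᶜ) := by
    have := measure_inter_add_diff (μ := γ) E hΩm
    rw [← this, diff_eq]
  have hconst : 2 * (γ E * γ (Ω \ E) + γ (E ∩ Ω) * γ (Eᶜ ∩ Ωᶜ))
      = 2 * (γ (E ∩ Ω) * γ (Eᶜ ∩ Ω) + γ (E ∩ Ω) * γ (Eᶜ ∩ Ωᶜ) +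
          γ (E ∩ Ωᶜ) * γ (Eᶜ ∩ Ω)) := by
    rw [hdiff, hsplit]; ring
  rw [hconst]
  rw [le_liminf_iff]
  intro b hb
  -- the truncated sums
  set I : ℕ → Set (EuclideanSpace ℝ (Fin N)) → ENNReal :=
    fun n A => ∫⁻ x in A, gee N n x ∂γ with hI
  set S : ℕ → ENNReal := fun n =>
    2 * (I n (E ∩ Ω) * I n (Eᶜ ∩ Ω) + I n (E ∩ Ω) * I n (Eᶜ ∩ Ωᶜ) +
      I n (E ∩ Ωᶜ) * I n (Eᶜ ∩ Ω)) with hS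
  have hfin : ∀ A : Set (EuclideanSpace ℝ (Fin N)), γ A ≠ ⊤ := fun A => measure_ne_top γ A
  have htendS : Tendsto S atTop (nhds (2 * (γ (E ∩ Ω) * γ (Eᶜ ∩ Ω) +
      γ (E ∩ Ω) * γ (Eᶜ ∩ Ωᶜ) + γ (E ∩ Ωᶜ) * γ (Eᶜ ∩ Ω)))) := by
    have t1 := ENNReal.Tendsto.mul (tendsto_gee_lintegral N (E ∩ Ω))
      (Or.inr (hfin _)) (tendsto_gee_lintegral N (Eᶜ ∩ Ω)) (Or.inr (hfin _))
    have t2 := ENNReal.Tendsto.mul (tendsto_gee_lintegral N (E ∩ Ω))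
      (Or.inr (hfin _)) (tendsto_gee_lintegral N (Eᶜ ∩ Ωᶜ)) (Or.inr (hfin _))
    have t3 := ENNReal.Tendsto.mul (tendsto_gee_lintegral N (E ∩ Ωᶜ))
      (Or.inr (hfin _)) (tendsto_gee_lintegral N (Eᶜ ∩ Ω)) (Or.inr (hfin _))
    exact ENNReal.Tendsto.const_mul ((t1.add t2).add t3) (Or.inr (by norm_num))
  obtain ⟨n, hn1, hbn⟩ := ((eventually_ge_atTop 1).and
    (htendS.eventually (eventually_gt_nhds hb))).exists
  have hT : (1 : ℝ) ≤ (n : ℝ) := by exact_mod_cast hn1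
  -- the key pointwise (in s) bound
  have key : ∀ s : ℝ, 0 < s →
      ENNReal.ofReal ((n : ℝ) ^ (-s / 2)) * S n ≤ ENNReal.ofReal s * Pgamma N s E Ω := by
    intro s hs
    have h1 := L_lower N hs hT (E ∩ Ω) (Eᶜ ∩ Ω)
    have h2 := L_lower N hs hT (E ∩ Ω) (Eᶜ ∩ Ωᶜ)
    have h3 := L_lower N hs hT (E ∩ Ωᶜ) (Eᶜ ∩ Ω)
    have hre : ENNReal.ofReal ((n : ℝ) ^ (-s / 2)) * S n
        = ENNReal.ofReal (2 * (n : ℝ) ^ (-s / 2)) *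
            (I n (E ∩ Ω) * I n (Eᶜ ∩ Ω)) +
          ENNReal.ofReal (2 * (n : ℝ) ^ (-s / 2)) *
            (I n (E ∩ Ω) * I n (Eᶜ ∩ Ωᶜ)) +
          ENNReal.ofReal (2 * (n : ℝ) ^ (-s / 2)) *
            (I n (E ∩ Ωᶜ) * I n (Eᶜ ∩ Ω)) := by
      rw [hS]
      rw [ENNReal.ofReal_mul (by norm_num : (0:ℝ) ≤ 2)]
      rw [ENNReal.ofReal_ofNat]
      ring
    rw [hre, Pgamma, mul_add, mul_add]
    exact add_le_add (add_le_add h1 h2) h3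
  -- now conclude using continuity of `s ↦ n ^ (-s/2)` at `0`
  have hn0 : (n : ℝ) ≠ 0 := (lt_of_lt_of_le zero_lt_one hT).ne'
  have hcont : Tendsto (fun s : ℝ => ENNReal.ofReal ((n : ℝ) ^ (-s / 2)) * S n)
      (nhdsWithin 0 (Set.Ioi 0)) (nhds (S n)) := by
    have hr : Tendsto (fun s : ℝ => (n : ℝ) ^ (-s / 2)) (nhdsWithin 0 (Set.Ioi 0))
        (nhds 1) := by
      have hc : ContinuousAt (fun s : ℝ => (n : ℝ) ^ (-s / 2)) 0 := by
        have h2 : ContinuousAt (fun s : ℝ => -s / 2) 0 :=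
          (continuous_neg.div_const 2).continuousAt
        have h1 : ContinuousAt (fun r : ℝ => (n : ℝ) ^ r) ((fun s : ℝ => -s / 2) 0) :=
          Real.continuousAt_const_rpow hn0
        exact ContinuousAt.comp (f := fun s : ℝ => -s / 2) (x := (0:ℝ)) h1 h2
      have h3 : Tendsto (fun s : ℝ => (n : ℝ) ^ (-s / 2)) (nhdsWithin 0 (Set.Ioi 0))
          (nhds ((n : ℝ) ^ (-(0:ℝ) / 2))) := hc.tendsto.mono_left nhdsWithin_le_nhds
      simpa using h3
    have h1 : Tendsto (fun s : ℝ => ENNReal.ofReal ((n : ℝ) ^ (-s / 2)))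
        (nhdsWithin 0 (Set.Ioi 0)) (nhds 1) := by
      simpa [ENNReal.ofReal_one, Function.comp_def] using (ENNReal.continuous_ofReal.tendsto 1).comp hr
    have h2 := ENNReal.Tendsto.mul_const h1 (a := (1 : ENNReal)) (b := S n)
      (Or.inl one_ne_zero)
    simpa using h2
  have hev : ∀ᶠ s in nhdsWithin (0:ℝ) (Set.Ioi 0),
      b < ENNReal.ofReal ((n : ℝ) ^ (-s / 2)) * S n :=
    hcont.eventually (eventually_gt_nhds hbn)
  filter_upwards [hev, self_mem_nhdsWithin] with s hs1 hs2
  exact lt_of_lt_of_le hs1 (key s hs2)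
end

section
/- For any x, y ∈ ℝ^N and any s ∈ (0,1), K_s(x,y) ≤ e^{|x|²/4} e^{|y|²/4} K̃_s(|x-y|), where for r ≥ 0, K̃_s(r) := ∫_0^∞ exp(-e^t r²/(2(e^{2t}-1))) · t^{-s/2-1} (1-e^{-2t})^{-N/2} dt. -/
open MeasureTheory Real Set Filter

/-- The radial kernel $\tilde K_s$. -/
noncomputable def Ktilde (N : ℕ) (s : ℝ) (r : ℝ) : ENNReal :=
  ∫⁻ t in Ioi (0 : ℝ), ENNReal.ofReal
    (Real.exp (-(Real.exp t * r ^ 2) / (2 * (Real.exp (2 * t) - 1))) *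
      (t ^ (-s / 2 - 1) * (1 - Real.exp (-2 * t)) ^ (-(N : ℝ) / 2)))

/-- upper bound for the kernel:
$K_s(x,y) ≤ e^{|x|^2/4} e^{|y|^2/4} \tilde K_s(|x-y|)$. -/
theorem stmt_6 (N : ℕ) (x y : EuclideanSpace ℝ (Fin N)) (s : ℝ) (hs : s ∈ Set.Ioo (0 : ℝ) 1) :
    Kker N s x y ≤
      ENNReal.ofReal (Real.exp (‖x‖ ^ 2 / 4) * Real.exp (‖y‖ ^ 2 / 4)) *
        Ktilde N s ‖x - y‖ := by
  have hC : (0:ℝ) ≤ Real.exp (‖x‖ ^ 2 / 4) * Real.exp (‖y‖ ^ 2 / 4) := by positivity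
  rw [Kker, Ktilde, ← lintegral_const_mul' _ _ ENNReal.ofReal_ne_top]
  refine lintegral_mono_ae ((ae_restrict_iff' measurableSet_Ioi).2 (ae_of_all _ fun t ht => ?_))
  rw [← ENNReal.ofReal_mul hC]
  apply ENNReal.ofReal_le_ofReal
  have ht0 : (0:ℝ) < t := ht
  have hb : (0:ℝ) < 1 - Real.exp (-2 * t) := by
    have : Real.exp (-2 * t) < 1 := Real.exp_lt_one_iff.2 (by linarith)
    linarith
  set a := Real.exp (-t) with ha
  have ha0 : 0 < a := Real.exp_pos _
  have ha1 : a < 1 := Real.exp_lt_one_iff.2 (by linarith)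
  have ha2 : Real.exp (-2 * t) = a ^ 2 := by
    rw [show (-2 * t) = (-t) + (-t) by ring, Real.exp_add]; ring
  have hat : Real.exp t = a⁻¹ := by
    rw [ha, Real.exp_neg, inv_inv]
  have hat2 : Real.exp (2 * t) = (a⁻¹) ^ 2 := by
    rw [show (2 * t) = t + t by ring, Real.exp_add, hat]; ring
  set u := ‖x‖ ^ 2 with hu
  set v := ‖y‖ ^ 2 with hv
  set p := (inner ℝ x y : ℝ) with hp
  have hxy : ‖x - y‖ ^ 2 = u - 2 * p + v := by
    rw [hu, hv, hp, @norm_sub_sq_real]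
  have hu0 : 0 ≤ u := by positivity
  have hv0 : 0 ≤ v := by positivity
  -- exponent comparison
  have hexp : -(Real.exp (-2 * t) * u - 2 * Real.exp (-t) * p + Real.exp (-2 * t) * v) /
        (2 * (1 - Real.exp (-2 * t))) ≤
      u / 4 + v / 4 + -(Real.exp t * ‖x - y‖ ^ 2) / (2 * (Real.exp (2 * t) - 1)) := by
    rw [ha2, hat, hat2, hxy, ← ha]
    have hne : (1:ℝ) - a ^ 2 ≠ 0 := by nlinarith
    have hne2 : (1:ℝ) + a ≠ 0 := by linarith
    rw [← sub_nonneg]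
    have heq : u / 4 + v / 4 + -(a⁻¹ * (u - 2 * p + v)) / (2 * ((a⁻¹) ^ 2 - 1)) -
        -(a ^ 2 * u - 2 * a * p + a ^ 2 * v) / (2 * (1 - a ^ 2)) =
        (u + v) * (1 - a) / (4 * (1 + a)) := by
      field_simp
      ring
    rw [heq]
    apply div_nonneg (mul_nonneg (by linarith) (by linarith)) (by linarith)
  have h1 : Real.exp (-(Real.exp (-2 * t) * u - 2 * Real.exp (-t) * p + Real.exp (-2 * t) * v) /
        (2 * (1 - Real.exp (-2 * t)))) ≤
      Real.exp (u / 4) * Real.exp (v / 4) *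
        Real.exp (-(Real.exp t * ‖x - y‖ ^ 2) / (2 * (Real.exp (2 * t) - 1))) := by
    rw [← Real.exp_add, ← Real.exp_add]
    exact Real.exp_le_exp.2 hexp
  have hB : 0 ≤ (1 - Real.exp (-2 * t)) ^ (-(N : ℝ) / 2) := Real.rpow_nonneg hb.le _
  have ht' : 0 ≤ t ^ (-s / 2 - 1) := Real.rpow_nonneg ht0.le _
  calc mehler N t x y * t ^ (-s / 2 - 1)
      = Real.exp (-(Real.exp (-2 * t) * u - 2 * Real.exp (-t) * p + Real.exp (-2 * t) * v) /
          (2 * (1 - Real.exp (-2 * t)))) *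
        ((1 - Real.exp (-2 * t)) ^ (-(N : ℝ) / 2) * t ^ (-s / 2 - 1)) := by
          rw [mehler]; ring
    _ ≤ (Real.exp (u / 4) * Real.exp (v / 4) *
          Real.exp (-(Real.exp t * ‖x - y‖ ^ 2) / (2 * (Real.exp (2 * t) - 1)))) *
        ((1 - Real.exp (-2 * t)) ^ (-(N : ℝ) / 2) * t ^ (-s / 2 - 1)) :=
          mul_le_mul_of_nonneg_right h1 (mul_nonneg hB ht')
    _ = Real.exp (u / 4) * Real.exp (v / 4) *
        (Real.exp (-(Real.exp t * ‖x - y‖ ^ 2) / (2 * (Real.exp (2 * t) - 1))) *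
          (t ^ (-s / 2 - 1) * (1 - Real.exp (-2 * t)) ^ (-(N : ℝ) / 2))) := by ring
end

section
/- For any x, y ∈ ℝ^N, lim_{t→0⁺} M_t(x,y)/H_t(|x-y|) = (2π)^{N/2} e^{|x|²/4} e^{|y|²/4}, where H_t(r) := e^{-r²/(4t)}/(4πt)^{N/2} is the Gauss–Weierstrass kernel. -/
open MeasureTheory Real Set Filter

section StmtSeven
open Real Filter Set

private lemma limA : Tendsto (fun s : ℝ => (Real.exp s - 1) / s) (nhdsWithin 0 {0}ᶜ) (nhds 1) := by
  have h := Real.hasDerivAt_exp 0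
  rw [hasDerivAt_iff_tendsto_slope] at h
  simpa [slope_fun_def, Real.exp_zero, div_eq_inv_mul] using h

private lemma limB : Tendsto (fun s : ℝ => (Real.exp s - 1 - s) / s ^ 2) (nhdsWithin 0 {0}ᶜ)
    (nhds (1/2)) := by
  apply HasDerivAt.lhopital_zero_nhdsNE (f' := fun s => Real.exp s - 1) (g' := fun s => 2 * s)
  · filter_upwards with s
    exact ((Real.hasDerivAt_exp s).sub_const 1).sub (hasDerivAt_id s)
  · filter_upwards with s
    simpa [two_mul] using hasDerivAt_pow 2 s
  · filter_upwards [self_mem_nhdsWithin] with s hs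
    exact mul_ne_zero two_ne_zero hs
  · have : Tendsto (fun s : ℝ => Real.exp s - 1 - s) (nhds 0) (nhds 0) := by
      have hc : Continuous fun s : ℝ => Real.exp s - 1 - s := by continuity
      simpa using hc.tendsto 0
    exact this.mono_left nhdsWithin_le_nhds
  · have : Tendsto (fun s : ℝ => s ^ 2) (nhds 0) (nhds 0) := by
      simpa using (continuous_pow 2).tendsto (0:ℝ)
    exact this.mono_left nhdsWithin_le_nhds
  · have := limA.div_const 2
    rw [show (1:ℝ)/2 = 1/2 by norm_num] at this
    apply this.congr
    intro s
    rw [div_div]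
    ring_nf

private lemma mapmul (c : ℝ) (hc : c ≠ 0) :
    Tendsto (fun t : ℝ => c * t) (nhdsWithin 0 (Ioi 0)) (nhdsWithin 0 {0}ᶜ) := by
  apply tendsto_nhdsWithin_of_tendsto_nhds_of_eventually_within
  · simpa using ((continuous_mul_left c).tendsto (0:ℝ)).mono_left nhdsWithin_le_nhds
  · filter_upwards [self_mem_nhdsWithin] with t ht
    exact mul_ne_zero hc (ne_of_gt ht)

/-- $\lim_{t→0^+} M_t(x,y)/H_t(|x-y|) = (2π)^{N/2} e^{|x|^2/4} e^{|y|^2/4}$,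
where $H_t(r)=e^{-r^2/(4t)}/(4πt)^{N/2}$ is the Gauss–Weierstrass kernel. -/
theorem stmt_7 (N : ℕ) (x y : EuclideanSpace ℝ (Fin N)) :
    Filter.Tendsto
      (fun t : ℝ => mehler N t x y /
        (Real.exp (-‖x - y‖ ^ 2 / (4 * t)) / (4 * π * t) ^ ((N : ℝ) / 2)))
      (nhdsWithin 0 (Set.Ioi 0))
      (nhds ((2 * π) ^ ((N : ℝ) / 2) * Real.exp (‖x‖ ^ 2 / 4) * Real.exp (‖y‖ ^ 2 / 4))) := by
  have hπ : (0:ℝ) < π := Real.pi_pos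
  set q : ℝ := (inner ℝ x y : ℝ) with hq
  set p : ℝ := ‖x‖^2 + ‖y‖^2 with hp
  have hmono : nhdsWithin (0:ℝ) (Ioi 0) ≤ nhdsWithin 0 {0}ᶜ :=
    nhdsWithin_mono 0 (fun t ht => ne_of_gt ht)
  -- component limits
  have hA2 : Tendsto (fun t : ℝ => (Real.exp (2*t) - 1) / (2*t)) (nhdsWithin 0 (Ioi 0))
      (nhds 1) := limA.comp (mapmul 2 two_ne_zero)
  have hB2 : Tendsto (fun t : ℝ => (Real.exp (2*t) - 1 - 2*t) / (2*t)^2) (nhdsWithin 0 (Ioi 0))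
      (nhds (1/2)) := limB.comp (mapmul 2 two_ne_zero)
  have hA1 : Tendsto (fun t : ℝ => (Real.exp t - 1) / t) (nhdsWithin 0 (Ioi 0))
      (nhds 1) := limA.mono_left hmono
  have hB1 : Tendsto (fun t : ℝ => (Real.exp t - 1 - t) / t^2) (nhdsWithin 0 (Ioi 0))
      (nhds (1/2)) := limB.mono_left hmono
  have hAn : Tendsto (fun t : ℝ => (Real.exp (-1*t) - 1) / (-1*t)) (nhdsWithin 0 (Ioi 0))
      (nhds 1) := limA.comp (mapmul (-1) (by norm_num))
  have hBn : Tendsto (fun t : ℝ => (Real.exp (-1*t) - 1 - (-1*t)) / (-1*t)^2)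
      (nhdsWithin 0 (Ioi 0)) (nhds (1/2)) := limB.comp (mapmul (-1) (by norm_num))
  have hAn2 : Tendsto (fun t : ℝ => (Real.exp (-2*t) - 1) / (-2*t)) (nhdsWithin 0 (Ioi 0))
      (nhds 1) := limA.comp (mapmul (-2) (by norm_num))
  -- f and g
  have hf : Tendsto (fun t : ℝ => ((Real.exp (2*t) - 1 - 2*t) / (2*t)^2) /
      (2 * ((Real.exp (2*t) - 1) / (2*t)))) (nhdsWithin 0 (Ioi 0)) (nhds (1/4)) := by
    have := hB2.div (hA2.const_mul 2) (by norm_num)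
    convert this using 2
    all_goals norm_num
  have hg : Tendsto (fun t : ℝ =>
      ((Real.exp t - 1 - t) / t^2 - (Real.exp (-1*t) - 1 - (-1*t)) / (-1*t)^2) /
      (4 * ((Real.exp t - 1) / t + (Real.exp (-1*t) - 1) / (-1*t))))
      (nhdsWithin 0 (Ioi 0)) (nhds 0) := by
    have := (hB1.sub hBn).div ((hA1.add hAn).const_mul 4) (by norm_num)
    convert this using 2
    all_goals norm_num
  -- base
  have hbase : Tendsto (fun t : ℝ => 2 * π / ((Real.exp (-2*t) - 1) / (-2*t)))
      (nhdsWithin 0 (Ioi 0)) (nhds (2*π)) := by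
    have := tendsto_const_nhds (x := 2*π) (f := nhdsWithin (0:ℝ) (Ioi 0))
    have h2 := this.div hAn2 one_ne_zero
    rw [div_one] at h2
    exact h2
  have hbaser : Tendsto (fun t : ℝ => (2 * π / ((Real.exp (-2*t) - 1) / (-2*t))) ^ ((N:ℝ)/2))
      (nhdsWithin 0 (Ioi 0)) (nhds ((2*π) ^ ((N:ℝ)/2))) :=
    hbase.rpow_const (Or.inl (by positivity))
  -- exponent
  have hexp : Tendsto (fun t : ℝ =>
      Real.exp (p * (((Real.exp (2*t) - 1 - 2*t) / (2*t)^2) /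
          (2 * ((Real.exp (2*t) - 1) / (2*t)))) -
        2 * q * (((Real.exp t - 1 - t) / t^2 - (Real.exp (-1*t) - 1 - (-1*t)) / (-1*t)^2) /
          (4 * ((Real.exp t - 1) / t + (Real.exp (-1*t) - 1) / (-1*t))))))
      (nhdsWithin 0 (Ioi 0)) (nhds (Real.exp (p * (1/4) - 2 * q * 0))) :=
    (Real.continuous_exp.tendsto _).comp ((hf.const_mul p).sub (hg.const_mul (2*q)))
  have hG := hbaser.mul hexp
  have hval : (2*π) ^ ((N:ℝ)/2) * Real.exp (p * (1/4) - 2 * q * 0)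
      = (2 * π) ^ ((N : ℝ) / 2) * Real.exp (‖x‖ ^ 2 / 4) * Real.exp (‖y‖ ^ 2 / 4) := by
    rw [hp, mul_assoc ((2*π) ^ ((N:ℝ)/2)), ← Real.exp_add]
    congr 2
    ring
  rw [← hval]
  apply hG.congr'
  filter_upwards [self_mem_nhdsWithin] with t ht
  simp only [mem_Ioi] at ht
  have ht0 : t ≠ 0 := ne_of_gt ht
  set v := Real.exp t with hv
  have hv0 : 0 < v := Real.exp_pos t
  have hv1 : 1 < v := by nlinarith [Real.add_one_le_exp t]
  have e2t : Real.exp (-2*t) = (v*v)⁻¹ := by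
    rw [show (-2*t : ℝ) = -(t+t) by ring, Real.exp_neg, Real.exp_add]
  have e2t' : Real.exp (2*t) = v*v := by rw [show (2*t : ℝ) = t+t by ring, Real.exp_add]
  have e1t : Real.exp (-1*t) = v⁻¹ := by rw [show (-1*t : ℝ) = -t by ring, Real.exp_neg]
  have e1t' : Real.exp (-t) = v⁻¹ := by rw [Real.exp_neg]
  have hvv : 1 < v*v := by nlinarith
  have hvv0 : (v*v : ℝ) ≠ 0 := by positivity
  have hvvne : v*v - 1 ≠ 0 := by nlinarith
  have ha : 0 < 1 - (v*v)⁻¹ := by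
    have h1 : (v*v)⁻¹ < 1 := inv_lt_one_of_one_lt₀ hvv
    linarith
  have hD : 0 < 4*π*t := by positivity
  have hxy : ‖x - y‖^2 = ‖x‖^2 - 2*q + ‖y‖^2 := by
    rw [hq]; exact norm_sub_sq_real x y
  unfold mehler
  rw [e2t, e2t', e1t, e1t', hxy, ← hq]
  have hbase_eq : 2 * π / (((v*v)⁻¹ - 1) / (-2*t)) = 4*π*t / (1 - (v*v)⁻¹) := by
    rw [div_div_eq_mul_div, div_eq_div_iff (by linarith) (by positivity)]
    ring
  rw [hbase_eq]
  have hrpow : (4*π*t / (1 - (v*v)⁻¹)) ^ ((N:ℝ)/2)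
      = (4*π*t) ^ ((N:ℝ)/2) * (1 - (v*v)⁻¹) ^ (-(N:ℝ)/2) := by
    rw [Real.div_rpow hD.le ha.le, neg_div, Real.rpow_neg ha.le, div_eq_mul_inv]
  rw [hrpow]
  have hfval : (v*v - 1 - 2*t) / (2*t)^2 / (2 * ((v*v - 1) / (2*t)))
      = (v*v - 1 - 2*t) / (4*t*(v*v-1)) := by
    field_simp
    ring
  have hsum : (v - 1) / t + (v⁻¹ - 1) / (-1*t) = (v*v - 1)/(v*t) := by
    field_simp
    ring
  have hdiff : (v - 1 - t) / t^2 - (v⁻¹ - 1 - (-1*t)) / (-1*t)^2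
      = (v*v - 1 - 2*t*v)/(v*t^2) := by
    field_simp
    ring
  have hgval : ((v - 1 - t) / t^2 - (v⁻¹ - 1 - (-1*t)) / (-1*t)^2) /
      (4 * ((v - 1) / t + (v⁻¹ - 1) / (-1*t)))
      = (v*v - 1 - 2*t*v) / (4*t*(v*v-1)) := by
    rw [hdiff, hsum]
    field_simp
  rw [hfval, hgval]
  have hL : -((v*v)⁻¹ * ‖x‖ ^ 2 - 2 * v⁻¹ * q + (v*v)⁻¹ * ‖y‖ ^ 2) / (2 * (1 - (v*v)⁻¹))
      = -(‖x‖ ^ 2 - 2*v*q + ‖y‖ ^ 2) / (2 * (v*v - 1)) := by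
    rw [div_eq_div_iff (by positivity) (by positivity)]
    field_simp
  rw [hL]
  have hAEC : -(‖x‖ ^ 2 - 2*v*q + ‖y‖ ^ 2) / (2 * (v*v - 1))
      = (p * ((v*v - 1 - 2*t) / (4*t*(v*v-1))) -
          2 * q * ((v*v - 1 - 2*t*v) / (4*t*(v*v-1)))) +
        -(‖x‖ ^ 2 - 2*q + ‖y‖ ^ 2) / (4*t) := by
    rw [hp]
    generalize hw : v*v - 1 = w at hvvne ⊢
    field_simp
    ring
  rw [hAEC, Real.exp_add]
  have hPne : (4*π*t) ^ ((N:ℝ)/2) ≠ 0 := (Real.rpow_pos_of_pos hD _).ne'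
  have hCne : Real.exp (-(‖x‖ ^ 2 - 2*q + ‖y‖ ^ 2) / (4*t)) ≠ 0 := Real.exp_ne_zero _
  field_simp

end StmtSeven
end

section
/- Let Ω ⊆ ℝ^N be a measurable set, and for a measurable set E ⊆ ℝ^N define μ(E) := 2(γ(E)γ(Ω\E) + γ(E∩Ω)γ(Eᶜ∩Ωᶜ)). Then μ is subadditive: for all measurable sets E, F ⊆ ℝ^N, μ(E∪F) ≤ μ(E) + μ(F). -/
open MeasureTheory Real Set Filter

/-- The limit set function $μ(E) = 2(γ(E)γ(Ω\setminus E)+γ(E∩Ω)γ(E^c∩Ω^c))$. -/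
noncomputable def muSet (N : ℕ) (Ω E : Set (EuclideanSpace ℝ (Fin N))) : ENNReal :=
  2 * (gaussMeasure N E * gaussMeasure N (Ω \ E) +
    gaussMeasure N (E ∩ Ω) * gaussMeasure N (Eᶜ ∩ Ωᶜ))

/-- $μ$ is subadditive: $μ(E∪F) ≤ μ(E)+μ(F)$. -/
theorem stmt_10 (N : ℕ) (Ω : Set (EuclideanSpace ℝ (Fin N))) (hΩ : MeasurableSet Ω)
    (E F : Set (EuclideanSpace ℝ (Fin N))) (hE : MeasurableSet E) (hF : MeasurableSet F) :
    muSet N Ω (E ∪ F) ≤ muSet N Ω E + muSet N Ω F := by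
  set g := gaussMeasure N
  have hA : g (E ∪ F) * g (Ω \ (E ∪ F)) ≤ g E * g (Ω \ E) + g F * g (Ω \ F) := by
    calc g (E ∪ F) * g (Ω \ (E ∪ F)) ≤ (g E + g F) * g (Ω \ (E ∪ F)) :=
          mul_le_mul_left (measure_union_le E F) _
      _ = g E * g (Ω \ (E ∪ F)) + g F * g (Ω \ (E ∪ F)) := add_mul _ _ _
      _ ≤ g E * g (Ω \ E) + g F * g (Ω \ F) := by
          gcongr
          · exact subset_union_left
          · exact subset_union_right
  have hB : g ((E ∪ F) ∩ Ω) * g ((E ∪ F)ᶜ ∩ Ωᶜ) ≤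
      g (E ∩ Ω) * g (Eᶜ ∩ Ωᶜ) + g (F ∩ Ω) * g (Fᶜ ∩ Ωᶜ) := by
    have h1 : g ((E ∪ F) ∩ Ω) ≤ g (E ∩ Ω) + g (F ∩ Ω) := by
      rw [union_inter_distrib_right]; exact measure_union_le _ _
    calc g ((E ∪ F) ∩ Ω) * g ((E ∪ F)ᶜ ∩ Ωᶜ)
        ≤ (g (E ∩ Ω) + g (F ∩ Ω)) * g ((E ∪ F)ᶜ ∩ Ωᶜ) := mul_le_mul_left h1 _
      _ = g (E ∩ Ω) * g ((E ∪ F)ᶜ ∩ Ωᶜ) + g (F ∩ Ω) * g ((E ∪ F)ᶜ ∩ Ωᶜ) := add_mul _ _ _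
      _ ≤ g (E ∩ Ω) * g (Eᶜ ∩ Ωᶜ) + g (F ∩ Ω) * g (Fᶜ ∩ Ωᶜ) := by
          gcongr
          · exact subset_union_left
          · exact subset_union_right
  unfold muSet
  calc 2 * (g (E ∪ F) * g (Ω \ (E ∪ F)) + g ((E ∪ F) ∩ Ω) * g ((E ∪ F)ᶜ ∩ Ωᶜ))
      ≤ 2 * ((g E * g (Ω \ E) + g F * g (Ω \ F)) +
        (g (E ∩ Ω) * g (Eᶜ ∩ Ωᶜ) + g (F ∩ Ω) * g (Fᶜ ∩ Ωᶜ))) := by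
        exact mul_le_mul_right (add_le_add hA hB) 2
    _ = 2 * (g E * g (Ω \ E) + g (E ∩ Ω) * g (Eᶜ ∩ Ωᶜ)) +
        2 * (g F * g (Ω \ F) + g (F ∩ Ω) * g (Fᶜ ∩ Ωᶜ)) := by ring
end

section
/- Let Ω ⊆ ℝ^N be a nonempty open set, and for a measurable set E ⊆ ℝ^N define μ(E) := 2(γ(E)γ(Ω\E) + γ(E∩Ω)γ(Eᶜ∩Ωᶜ)). Then μ is not monotone with respect to inclusions: there exist measurable sets E ⊆ F with μ(E) > μ(F). -/
open MeasureTheory Real Set Filter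

lemma gaussDensity_pos (N : ℕ) (x : EuclideanSpace ℝ (Fin N)) : 0 < gaussDensity N x :=
  mul_pos (Real.rpow_pos_of_pos (by positivity) _) (Real.exp_pos _)

lemma gaussDensity_continuous (N : ℕ) : Continuous (gaussDensity N) := by
  unfold gaussDensity; fun_prop

lemma gaussMeasure_pos_of_isOpen (N : ℕ) {U : Set (EuclideanSpace ℝ (Fin N))}
    (hU : IsOpen U) (hne : U.Nonempty) : 0 < gaussMeasure N U := by
  rw [gaussMeasure, withDensity_apply _ hU.measurableSet]
  have hm : Measurable fun a : EuclideanSpace ℝ (Fin N) => ENNReal.ofReal (gaussDensity N a) :=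
    ENNReal.measurable_ofReal.comp (gaussDensity_continuous N).measurable
  rw [lintegral_pos_iff_support hm]
  have hsupp : Function.support (fun x : EuclideanSpace ℝ (Fin N) =>
      ENNReal.ofReal (gaussDensity N x)) = univ := by
    ext x
    simp only [Function.mem_support, mem_univ, iff_true]
    exact (ENNReal.ofReal_pos.mpr (gaussDensity_pos N x)).ne' 
  rw [hsupp, Measure.restrict_apply_univ]
  exact hU.measure_pos volume hne

/-- $μ$ is not monotone with respect to inclusions: there are measurable
sets $E ⊆ F$ with $μ(E) > μ(F)$. -/
theorem stmt_11 (N : ℕ) (hN : 0 < N) (Ω : Set (EuclideanSpace ℝ (Fin N)))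
    (hΩopen : IsOpen Ω) (hΩne : Ω.Nonempty) :
    ∃ E F : Set (EuclideanSpace ℝ (Fin N)),
      MeasurableSet E ∧ MeasurableSet F ∧ E ⊆ F ∧ muSet N Ω F < muSet N Ω E := by
  obtain ⟨x, hxΩ⟩ := hΩne
  obtain ⟨r, hr, hball⟩ := Metric.isOpen_iff.mp hΩopen x hxΩ
  refine ⟨Metric.ball x (r/2), univ, measurableSet_ball, MeasurableSet.univ,
    subset_univ _, ?_⟩
  have hF : muSet N Ω univ = 0 := by
    simp [muSet]
  rw [hF]
  have hE : 0 < gaussMeasure N (Metric.ball x (r/2)) :=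
    gaussMeasure_pos_of_isOpen N Metric.isOpen_ball
      (Metric.nonempty_ball.mpr (by linarith))
  have hA : 0 < gaussMeasure N (Ω \ Metric.ball x (r/2)) := by
    have hsub : Ω ∩ (Metric.closedBall x (r/2))ᶜ ⊆ Ω \ Metric.ball x (r/2) :=
      fun y hy => ⟨hy.1, fun h => hy.2 (Metric.ball_subset_closedBall h)⟩
    refine lt_of_lt_of_le ?_ (measure_mono hsub)
    refine gaussMeasure_pos_of_isOpen N
        (hΩopen.inter Metric.isClosed_closedBall.isOpen_compl) ?_
    · refine ⟨x + EuclideanSpace.single ⟨0, hN⟩ (3*r/4), ?_, ?_⟩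
      · apply hball
        simp only [Metric.mem_ball, dist_eq_norm, add_sub_cancel_left,
          EuclideanSpace.norm_single, Real.norm_eq_abs]
        rw [abs_of_pos (by linarith)]; linarith
      · simp only [mem_compl_iff, Metric.mem_closedBall, dist_eq_norm,
          add_sub_cancel_left, EuclideanSpace.norm_single, Real.norm_eq_abs, not_le]
        rw [abs_of_pos (by linarith)]; linarith
  calc (0 : ENNReal) < 2 * (gaussMeasure N (Metric.ball x (r/2)) *
        gaussMeasure N (Ω \ Metric.ball x (r/2)) + 0) := by
        rw [add_zero]
        exact ENNReal.mul_pos two_ne_zero (ENNReal.mul_pos hE.ne' hA.ne').ne'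
    _ ≤ muSet N Ω (Metric.ball x (r/2)) := by
        unfold muSet
        gcongr
        exact zero_le
end
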